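/- Let λ₁, λ₂ > 0 and let W be an integer-valued random variable with E|W| < ∞ such that E[λ₁ f(W+1) − W f(W) − λ₂ f(W−1)] = 0 for every bounded function f : ℤ → ℝ. Then W has the Skellam(λ₁,λ₂) distribution. -/

import Mathlib

open MeasureTheory ProbabilityTheory Real

/-- The Skellam distribution: law of `X - Y` for `X, Y` independent Poisson random
variables with rates `l1` and `l2`. -/
noncomputable def skellamMeasure (l1 l2 : ℝ) : Measure ℤ :=
  ((poissonMeasure l1.toNNReal).prod (poissonMeasure l2.toNNReal)).map
    (fun p => (p.1 : ℤ) - (p.2 : ℤ))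

/-- Kolmogorov–Smirnov distance between two real random variables on `Ω`. -/
noncomputable def dKS {Ω : Type*} [MeasurableSpace Ω] (μ : Measure Ω) (X Z : Ω → ℝ) : ℝ :=
  ⨆ x : ℝ, |(μ {ω | X ω ≤ x}).toReal - (μ {ω | Z ω ≤ x}).toReal|

/-- Kolmogorov–Smirnov distance between two distributions on `ℤ`. -/
noncomputable def dKSZ (μ1 μ2 : Measure ℤ) : ℝ :=
  ⨆ x : ℝ, |(μ1 {k : ℤ | (k : ℝ) ≤ x}).toReal - (μ2 {k : ℤ | (k : ℝ) ≤ x}).toReal|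

/-- Kolmogorov–Smirnov distance between two distributions on `ℝ`. -/
noncomputable def dKSR (μ1 μ2 : Measure ℝ) : ℝ :=
  ⨆ x : ℝ, |(μ1 {y : ℝ | y ≤ x}).toReal - (μ2 {y : ℝ | y ≤ x}).toReal|

/-- Modified Bessel function of the first kind, of integer order `k`. -/
noncomputable def besselI (k : ℤ) (z : ℝ) : ℝ :=
  ∑' j : ℕ, (z / 2) ^ (2 * j + k.natAbs) /
    ((Nat.factorial j : ℝ) * (Nat.factorial (j + k.natAbs) : ℝ))


open scoped NNReal

noncomputable def cfZ (ν : Measure ℤ) (t : ℝ) : ℂ := ∫ k : ℤ, Complex.exp (t * k * Complex.I) ∂ν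

lemma norm_exp_mul_I (x : ℝ) : ‖Complex.exp (x * Complex.I)‖ = 1 := by
  simp [Complex.norm_exp]

lemma integrable_bdd {α : Type*} [MeasurableSpace α] {ν : Measure α} [IsFiniteMeasure ν]
    {f : α → ℂ} (hm : AEStronglyMeasurable f ν) (C : ℝ) (h : ∀ a, ‖f a‖ ≤ C) :
    Integrable f ν :=
  (integrable_const C).mono' hm (Filter.Eventually.of_forall h)

lemma cfZ_eq_tsum (ν : Measure ℤ) [IsProbabilityMeasure ν] (t : ℝ) :
    cfZ ν t = ∑' j : ℤ, (ν {j}).toReal • Complex.exp (t * j * Complex.I) := by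
  refine integral_countable' ?_
  refine integrable_bdd ((measurable_of_countable _).aestronglyMeasurable) 1 (fun k => ?_)
  have : (t : ℂ) * k * Complex.I = ((t * k : ℝ) : ℂ) * Complex.I := by push_cast; ring
  rw [this, norm_exp_mul_I]

lemma integral_exp_int (m : ℤ) :
    ∫ t in Set.Ioc (0:ℝ) (2*π), Complex.exp (t * m * Complex.I) =
      if m = 0 then ((2*π : ℝ) : ℂ) else 0 := by
  have h2π : (0:ℝ) ≤ 2*π := by positivity
  rw [← intervalIntegral.integral_of_le h2π]
  rcases eq_or_ne m 0 with hm | hm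
  · simp [hm]
  · have hc : ((m:ℂ) * Complex.I) ≠ 0 := by
      simp [Complex.I_ne_zero, Int.cast_eq_zero, hm]
    have : ∀ t : ℝ, (t:ℂ) * m * Complex.I = Complex.exp ((m * Complex.I) * t) ^ 0 * Complex.exp 0 * ((m:ℂ) * Complex.I * t) := by
      intro t; simp; ring
    rw [show (fun t : ℝ => Complex.exp ((t:ℂ) * m * Complex.I)) = fun t : ℝ => Complex.exp ((m * Complex.I) * t) from funext fun t => by ring_nf]
    rw [integral_exp_mul_complex hc]
    simp only [if_neg hm]
    rw [show ((m:ℂ) * Complex.I) * ((2*π : ℝ):ℂ) = (m:ℤ) * (2 * π * Complex.I) by push_cast; ring]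
    rw [Complex.exp_int_mul_two_pi_mul_I]
    simp

lemma cf_singleton (ν : Measure ℤ) [IsProbabilityMeasure ν] (k : ℤ) :
    ∫ t in Set.Ioc (0:ℝ) (2*π), cfZ ν t * Complex.exp (-(t * k * Complex.I))
      = (2*π) * (ν {k}).toReal := by
  have hint : ∀ t : ℝ, cfZ ν t * Complex.exp (-(t * k * Complex.I))
      = ∑' j : ℤ, (ν {j}).toReal • Complex.exp (t * ((j - k : ℤ) : ℂ) * Complex.I) := by
    intro t
    rw [cfZ_eq_tsum, ← tsum_mul_right]
    congr 1; funext j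
    rw [smul_mul_assoc]
    congr 1
    rw [← Complex.exp_add]
    congr 1
    push_cast; ring
  have hnn : ∀ (j : ℤ) (t : ℝ),
      ‖(ν {j}).toReal • Complex.exp (t * ((j - k : ℤ) : ℂ) * Complex.I)‖₊
        = ‖(ν {j}).toReal‖₊ := by
    intro j t
    have hn : ‖Complex.exp (t * ((j - k : ℤ) : ℂ) * Complex.I)‖ = 1 := by
      have : (t : ℂ) * ((j - k : ℤ) : ℂ) * Complex.I
          = ((t * ((j - k : ℤ) : ℝ) : ℝ) : ℂ) * Complex.I := by push_cast; ring
      rw [this, norm_exp_mul_I]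
    ext
    rw [coe_nnnorm, coe_nnnorm, norm_smul, hn, mul_one]
  simp_rw [hint]
  rw [integral_tsum (fun j => (Continuous.aestronglyMeasurable (by continuity))) ?fin]
  case fin =>
    have : ∀ j : ℤ, ∫⁻ t in Set.Ioc (0:ℝ) (2*π),
        ‖(ν {j}).toReal • Complex.exp (t * ((j - k : ℤ) : ℂ) * Complex.I)‖ₑ
        = ν {j} * ENNReal.ofReal (2*π) := by
      intro j
      simp_rw [enorm_eq_nnnorm, hnn j]
      rw [MeasureTheory.setLIntegral_const]
      congr 1
      · rw [← enorm_eq_nnnorm, Real.enorm_eq_ofReal ENNReal.toReal_nonneg,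
          ENNReal.ofReal_toReal (measure_ne_top _ _)]
      · rw [Real.volume_Ioc]; norm_num
    simp_rw [this]
    rw [ENNReal.tsum_mul_right]
    have hsum : ∑' j : ℤ, ν {j} = 1 := by
      rw [← measure_iUnion (fun i j hij => by simp [hij]) (fun j => measurableSet_singleton j),
        Set.iUnion_of_singleton, measure_univ]
    rw [hsum, one_mul]
    exact ENNReal.ofReal_ne_top
  have hcalc : ∀ j : ℤ, ∫ t in Set.Ioc (0:ℝ) (2*π),
      (ν {j}).toReal • Complex.exp (t * ((j - k : ℤ) : ℂ) * Complex.I)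
      = (ν {j}).toReal • (if j = k then ((2*π : ℝ) : ℂ) else 0) := by
    intro j
    rw [integral_smul, integral_exp_int (j - k)]
    congr 1
    simp [sub_eq_zero]
  simp_rw [hcalc]
  rw [tsum_eq_single k (fun j hj => by simp [hj])]
  simp [mul_comm]

lemma ext_of_cfZ {ν₁ ν₂ : Measure ℤ} [IsProbabilityMeasure ν₁] [IsProbabilityMeasure ν₂]
    (h : ∀ t, cfZ ν₁ t = cfZ ν₂ t) : ν₁ = ν₂ := by
  refine MeasureTheory.Measure.ext_of_singleton fun k => ?_
  have h1 := cf_singleton ν₁ k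
  have h2 := cf_singleton ν₂ k
  simp_rw [h] at h1
  rw [h1] at h2
  have hπ : (2 * (π:ℂ)) ≠ 0 := by
    simp [Complex.ofReal_ne_zero, Real.pi_ne_zero]
  have h3 : ((ν₁ {k}).toReal : ℂ) = ((ν₂ {k}).toReal : ℂ) := mul_left_cancel₀ hπ h2
  exact (ENNReal.toReal_eq_toReal_iff' (measure_ne_top _ _) (measure_ne_top _ _)).mp
    (Complex.ofReal_inj.mp h3)

lemma poisson_cf (r : ℝ≥0) (c : ℂ) (hc : c.re = 0) :
    ∫ n : ℕ, Complex.exp (c * n) ∂(poissonMeasure r) =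
      Complex.exp ((r : ℝ) * (Complex.exp c - 1)) := by
  have hnorm : ∀ n : ℕ, ‖Complex.exp (c * n)‖ = 1 := by
    intro n
    rw [Complex.norm_exp]
    simp [hc]
  have hint : Integrable (fun n : ℕ => Complex.exp (c * n)) (poissonMeasure r) :=
    integrable_bdd ((measurable_of_countable _).aestronglyMeasurable) 1
      (fun n => le_of_eq (hnorm n))
  rw [integral_countable' hint]
  simp only [measureReal_def]
  have hsing : ∀ n : ℕ, ((poissonMeasure r) {n}).toReal = poissonPMFReal r n := by
    intro n
    rw [← measureReal_def, poissonMeasure_real_singleton, poissonPMFReal]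
  have hterm : ∀ n : ℕ, ((poissonMeasure r) {n}).toReal • Complex.exp (c * n)
      = Complex.exp (-(r:ℝ)) * (((r : ℝ) * Complex.exp c) ^ n / n.factorial) := by
    intro n
    rw [hsing n, poissonPMFReal, Complex.real_smul]
    push_cast [Complex.ofReal_exp]
    rw [mul_pow, ← Complex.exp_nat_mul, mul_comm (n:ℂ) c]
    ring
  simp_rw [hterm]
  rw [tsum_mul_left]
  have : ∑' n : ℕ, ((r : ℝ) * Complex.exp c) ^ n / n.factorial
      = Complex.exp ((r : ℝ) * Complex.exp c) := by
    rw [Complex.exp_eq_exp_ℂ, NormedSpace.exp_eq_tsum_div]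
  rw [this, ← Complex.exp_add]
  congr 1
  ring

instance skellam_prob (l1 l2 : ℝ) : IsProbabilityMeasure (skellamMeasure l1 l2) := by
  rw [skellamMeasure]
  exact Measure.isProbabilityMeasure_map (measurable_of_countable _).aemeasurable

lemma skellam_cf (l1 l2 : ℝ) (t : ℝ) :
    cfZ (skellamMeasure l1 l2) t =
      Complex.exp ((l1.toNNReal : ℝ) * (Complex.exp (t * Complex.I) - 1)
        + (l2.toNNReal : ℝ) * (Complex.exp (-(t * Complex.I)) - 1)) := by
  rw [cfZ, skellamMeasure,
    integral_map (measurable_of_countable _).aemeasurable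
      (measurable_of_countable _).aestronglyMeasurable]
  have hsplit : ∀ p : ℕ × ℕ,
      Complex.exp (t * (((p.1 : ℤ) - (p.2 : ℤ) : ℤ) : ℂ) * Complex.I)
        = Complex.exp ((t * Complex.I) * p.1) * Complex.exp ((-(t * Complex.I)) * p.2) := by
    intro p
    rw [← Complex.exp_add]
    congr 1
    push_cast
    ring
  simp_rw [hsplit]
  rw [integral_prod_mul (fun x : ℕ => Complex.exp ((t * Complex.I) * x))
      (fun y : ℕ => Complex.exp ((-(t * Complex.I)) * y))]
  rw [poisson_cf _ _ (by simp), poisson_cf _ _ (by simp), ← Complex.exp_add]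

lemma exp_int_re (t : ℝ) (a : ℤ) :
    (Complex.exp ((t:ℂ) * (a:ℂ) * Complex.I)).re = Real.cos (t * (a:ℝ)) := by
  rw [show (t:ℂ) * (a:ℂ) * Complex.I = ((t * (a:ℝ) : ℝ):ℂ) * Complex.I by push_cast; ring,
    Complex.exp_ofReal_mul_I_re]

lemma exp_int_im (t : ℝ) (a : ℤ) :
    (Complex.exp ((t:ℂ) * (a:ℂ) * Complex.I)).im = Real.sin (t * (a:ℝ)) := by
  rw [show (t:ℂ) * (a:ℂ) * Complex.I = ((t * (a:ℝ) : ℝ):ℂ) * Complex.I by push_cast; ring,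
    Complex.exp_ofReal_mul_I_im]

lemma norm_exp_int (t : ℝ) (a : ℤ) : ‖Complex.exp ((t:ℂ) * (a:ℂ) * Complex.I)‖ = 1 := by
  rw [show (t:ℂ) * (a:ℂ) * Complex.I = ((t * (a:ℝ) : ℝ):ℂ) * Complex.I by push_cast; ring,
    norm_exp_mul_I]

/-- derivative of `t ↦ exp (t • c)` -/
lemma hasDerivAt_exp_mul (c : ℂ) (t : ℝ) :
    HasDerivAt (fun s : ℝ => Complex.exp ((s:ℂ) * c)) (c * Complex.exp ((t:ℂ) * c)) t := by
  have h1 : HasDerivAt (fun s : ℝ => ((s:ℂ)) * c) c t := by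
    simpa using (Complex.ofRealCLM.hasDerivAt (x := t)).mul_const c
  have h2 := h1.cexp
  convert h2 using 1
  ring

theorem stmt_2 {Ω : Type*} [MeasurableSpace Ω] (μ : Measure Ω) [IsProbabilityMeasure μ]
    (l1 l2 : ℝ) (hl1 : 0 < l1) (hl2 : 0 < l2)
    (W : Ω → ℤ) (hW : Measurable W)
    (hInt : Integrable (fun ω => (W ω : ℝ)) μ)
    (hstein : ∀ f : ℤ → ℝ, (∃ C, ∀ k : ℤ, |f k| ≤ C) →
      ∫ ω, (l1 * f (W ω + 1) - (W ω : ℝ) * f (W ω) - l2 * f (W ω - 1)) ∂μ = 0) :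
    μ.map W = skellamMeasure l1 l2 := by
  -- the characteristic function of W
  set φ : ℝ → ℂ := fun t => ∫ ω, Complex.exp ((t:ℂ) * ((W ω : ℤ):ℂ) * Complex.I) ∂μ with hφdef
  have hmC : ∀ (F : ℤ → ℂ), AEStronglyMeasurable (fun ω => F (W ω)) μ :=
    fun F => ((measurable_of_countable F).comp hW).aestronglyMeasurable
  have hintexp : ∀ t : ℝ, Integrable (fun ω => Complex.exp ((t:ℂ) * ((W ω : ℤ):ℂ) * Complex.I)) μ :=
    fun t => integrable_bdd (hmC (fun k => Complex.exp ((t:ℂ) * (k:ℂ) * Complex.I))) 1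
      (fun ω => le_of_eq (norm_exp_int t (W ω)))
  have hnormW : ∀ ω, ‖((W ω : ℤ):ℂ)‖ = |(W ω : ℝ)| := by
    intro ω
    rw [← Complex.ofReal_intCast, Complex.norm_real, Real.norm_eq_abs]
  have hintW : ∀ t : ℝ, Integrable
      (fun ω => ((W ω : ℤ):ℂ) * Complex.exp ((t:ℂ) * ((W ω : ℤ):ℂ) * Complex.I)) μ := by
    intro t
    refine (hInt.abs).mono'
      (hmC (fun k => (k:ℂ) * Complex.exp ((t:ℂ) * (k:ℂ) * Complex.I)))
      (Filter.Eventually.of_forall fun ω => ?_)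
    rw [norm_mul, norm_exp_int, mul_one, hnormW]
  -- Stein identity in complex form
  have hWexp : ∀ t : ℝ,
      ∫ ω, ((W ω : ℤ):ℂ) * Complex.exp ((t:ℂ) * ((W ω : ℤ):ℂ) * Complex.I) ∂μ
        = (l1 * Complex.exp ((t:ℂ) * Complex.I) - l2 * Complex.exp ((t:ℂ) * (-Complex.I))) * φ t := by
    intro t
    set E1 : Ω → ℂ := fun ω => (l1:ℂ) * Complex.exp ((t:ℂ) * (((W ω + 1 : ℤ)):ℂ) * Complex.I) with hE1
    set E2 : Ω → ℂ := fun ω => ((W ω : ℤ):ℂ) * Complex.exp ((t:ℂ) * ((W ω : ℤ):ℂ) * Complex.I) with hE2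
    set E3 : Ω → ℂ := fun ω => (l2:ℂ) * Complex.exp ((t:ℂ) * (((W ω - 1 : ℤ)):ℂ) * Complex.I) with hE3
    have hI1 : Integrable E1 μ := by
      refine integrable_bdd (hmC (fun k => (l1:ℂ) * Complex.exp ((t:ℂ) * (((k + 1 : ℤ)):ℂ) * Complex.I))) |l1| (fun ω => ?_)
      rw [norm_mul, norm_exp_int, mul_one, Complex.norm_real, Real.norm_eq_abs]
    have hI2 : Integrable E2 μ := hintW t
    have hI3 : Integrable E3 μ := by
      refine integrable_bdd (hmC (fun k => (l2:ℂ) * Complex.exp ((t:ℂ) * (((k - 1 : ℤ)):ℂ) * Complex.I))) |l2| (fun ω => ?_)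
      rw [norm_mul, norm_exp_int, mul_one, Complex.norm_real, Real.norm_eq_abs]
    have hgInt : Integrable (fun ω => E1 ω - E2 ω - E3 ω) μ := (hI1.sub hI2).sub hI3
    have h0 : ∫ ω, (E1 ω - E2 ω - E3 ω) ∂μ = 0 := by
      have hre := integral_re hgInt
      have him := integral_im hgInt
      simp only [RCLike.re_to_complex, RCLike.im_to_complex] at hre him
      have hcos := hstein (fun k : ℤ => Real.cos (t * (k:ℝ))) ⟨1, fun k => Real.abs_cos_le_one _⟩
      have hsin := hstein (fun k : ℤ => Real.sin (t * (k:ℝ))) ⟨1, fun k => Real.abs_sin_le_one _⟩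
      have hreeq : ∀ ω, (E1 ω - E2 ω - E3 ω).re
          = l1 * Real.cos (t * ((W ω + 1 : ℤ):ℝ)) - (W ω : ℝ) * Real.cos (t * ((W ω : ℤ):ℝ))
            - l2 * Real.cos (t * ((W ω - 1 : ℤ):ℝ)) := by
        intro ω
        simp only [hE1, hE2, hE3, Complex.sub_re, Complex.mul_re, Complex.ofReal_re,
          Complex.ofReal_im, Complex.intCast_re, Complex.intCast_im, exp_int_re, exp_int_im,
          zero_mul, mul_zero, sub_zero]
      have himeq : ∀ ω, (E1 ω - E2 ω - E3 ω).im
          = l1 * Real.sin (t * ((W ω + 1 : ℤ):ℝ)) - (W ω : ℝ) * Real.sin (t * ((W ω : ℤ):ℝ))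
            - l2 * Real.sin (t * ((W ω - 1 : ℤ):ℝ)) := by
        intro ω
        simp only [hE1, hE2, hE3, Complex.sub_im, Complex.mul_im, Complex.ofReal_re,
          Complex.ofReal_im, Complex.intCast_re, Complex.intCast_im, exp_int_re, exp_int_im,
          zero_mul, mul_zero, add_zero, zero_add]
      apply Complex.ext
      · rw [← hre]
        simp only [Complex.zero_re]
        rw [← hcos]
        exact integral_congr_ae (Filter.Eventually.of_forall fun ω => hreeq ω)
      · rw [← him]
        simp only [Complex.zero_im]
        rw [← hsin]
        exact integral_congr_ae (Filter.Eventually.of_forall fun ω => himeq ω)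
    have hE1int : ∫ ω, E1 ω ∂μ = (l1:ℂ) * (Complex.exp ((t:ℂ) * Complex.I) * φ t) := by
      rw [hE1]
      simp_rw [show ∀ ω, (l1:ℂ) * Complex.exp ((t:ℂ) * (((W ω + 1 : ℤ)):ℂ) * Complex.I)
          = (l1:ℂ) * (Complex.exp ((t:ℂ) * Complex.I)
            * Complex.exp ((t:ℂ) * ((W ω : ℤ):ℂ) * Complex.I)) from fun ω => by
        rw [← Complex.exp_add]; congr 2; push_cast; ring]
      rw [integral_const_mul, integral_const_mul]
    have hE3int : ∫ ω, E3 ω ∂μ = (l2:ℂ) * (Complex.exp ((t:ℂ) * (-Complex.I)) * φ t) := by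
      rw [hE3]
      simp_rw [show ∀ ω, (l2:ℂ) * Complex.exp ((t:ℂ) * (((W ω - 1 : ℤ)):ℂ) * Complex.I)
          = (l2:ℂ) * (Complex.exp ((t:ℂ) * (-Complex.I))
            * Complex.exp ((t:ℂ) * ((W ω : ℤ):ℂ) * Complex.I)) from fun ω => by
        rw [← Complex.exp_add]; congr 2; push_cast; ring]
      rw [integral_const_mul, integral_const_mul]
    have hI12 : Integrable (fun ω => E1 ω - E2 ω) μ := hI1.sub hI2
    rw [integral_sub hI12 hI3, integral_sub hI1 hI2, hE1int, hE3int] at h0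
    linear_combination -h0
  -- derivative of φ
  have hφd : ∀ t : ℝ, HasDerivAt φ
      (Complex.I * ((l1 * Complex.exp ((t:ℂ) * Complex.I)
        - l2 * Complex.exp ((t:ℂ) * (-Complex.I))) * φ t)) t := by
    intro t
    have key := hasDerivAt_integral_of_dominated_loc_of_deriv_le (μ := μ) (x₀ := t)
      (F := fun (s:ℝ) ω => Complex.exp ((s:ℂ) * ((W ω : ℤ):ℂ) * Complex.I))
      (F' := fun (s:ℝ) ω => Complex.I * (((W ω : ℤ):ℂ)
        * Complex.exp ((s:ℂ) * ((W ω : ℤ):ℂ) * Complex.I)))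
      (bound := fun ω => |(W ω : ℝ)|) (Metric.ball_mem_nhds t one_pos)
      (Filter.Eventually.of_forall fun s =>
        hmC (fun k => Complex.exp ((s:ℂ) * (k:ℂ) * Complex.I)))
      (hintexp t)
      (hmC (fun k => Complex.I * ((k:ℂ) * Complex.exp ((t:ℂ) * (k:ℂ) * Complex.I))))
      (Filter.Eventually.of_forall fun ω s _ => by
        rw [norm_mul, Complex.norm_I, one_mul, norm_mul, norm_exp_int, mul_one, hnormW])
      hInt.abs
      (Filter.Eventually.of_forall fun ω s _ => by
        have h := hasDerivAt_exp_mul (((W ω : ℤ):ℂ) * Complex.I) s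
        simp only [← mul_assoc] at h
        exact h.congr_deriv (by ring))
    have h2 := key.2
    rw [integral_const_mul, hWexp t] at h2
    convert h2 using 1
  -- the ODE gives φ explicitly
  set g2 : ℝ → ℂ := fun t => l1 * (Complex.exp ((t:ℂ) * Complex.I) - 1)
    + l2 * (Complex.exp ((t:ℂ) * (-Complex.I)) - 1) with hg2
  have hg2d : ∀ t : ℝ, HasDerivAt g2
      ((l1:ℂ) * (Complex.I * Complex.exp ((t:ℂ) * Complex.I))
        + (l2:ℂ) * ((-Complex.I) * Complex.exp ((t:ℂ) * (-Complex.I)))) t := by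
    intro t
    exact (((hasDerivAt_exp_mul Complex.I t).sub_const 1).const_mul (l1:ℂ)).add
      (((hasDerivAt_exp_mul (-Complex.I) t).sub_const 1).const_mul (l2:ℂ))
  have hh : ∀ t : ℝ, HasDerivAt (fun s => φ s * Complex.exp (-(g2 s))) 0 t := by
    intro t
    have h1 := ((hg2d t).neg).cexp
    have h2 := (hφd t).mul h1
    exact h2.congr_deriv (by ring)
  have hconst : ∀ t : ℝ, φ t * Complex.exp (-(g2 t)) = φ 0 * Complex.exp (-(g2 0)) :=
    fun t => is_const_of_deriv_eq_zero (fun s => (hh s).differentiableAt)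
      (fun s => (hh s).deriv) t 0
  have hφ0 : φ 0 = 1 := by
    rw [hφdef]
    simp
  have hg20 : g2 0 = 0 := by simp [hg2]
  have hφeq : ∀ t : ℝ, φ t = Complex.exp (g2 t) := by
    intro t
    have h := hconst t
    rw [hφ0, hg20] at h
    simp only [neg_zero, Complex.exp_zero, mul_one, one_mul] at h
    rw [Complex.exp_neg] at h
    field_simp at h
    exact h
  -- conclude via characteristic functions
  have hmapprob : IsProbabilityMeasure (μ.map W) := Measure.isProbabilityMeasure_map hW.aemeasurable
  refine ext_of_cfZ fun t => ?_
  have hcf : cfZ (μ.map W) t = φ t := by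
    rw [cfZ, integral_map hW.aemeasurable (measurable_of_countable _).aestronglyMeasurable]
  rw [hcf, hφeq t, skellam_cf]
  congr 1
  simp only [hg2]
  rw [Real.coe_toNNReal _ hl1.le, Real.coe_toNNReal _ hl2.le,
    show ((t:ℂ)) * (-Complex.I) = -((t:ℂ) * Complex.I) by ring]
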